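/- Let 𝐪 be a permutation of {0,...,k−1}. Then the number of inversions of 𝐪 equals |heads(𝐪)| − 1 and the number of consecutions of 𝐪 equals |heads(rev(𝐪))| − 1. Moreover, the set of indices at which 𝐪 has a consecution is {h ∈ {0,...,k−2} : h ∉ heads(𝐪)}, the set of indices at which 𝐪 has an inversion is {h ∈ {0,...,k−2} : h ∉ heads(rev(𝐪))}, and these two sets partition {0,...,k−2}. -/

import Mathlib

/-- The Successor Infix Property: between any two equal indices of the tuple there is an
occurrence of their successor. -/
def SIP (t : List ℕ) : Prop :=
  ∀ a b : Fin t.length, a < b → t.get a = t.get b →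
    ∃ c : Fin t.length, a < c ∧ c < b ∧ t.get c = t.get a + 1

/-- One swap of two adjacent distinct commuting indices (indices differing by ≥ 2). -/
def CommuteStep (t t' : List ℕ) : Prop :=
  ∃ (u v : List ℕ) (x y : ℕ), x ≠ y ∧ x + 1 ≠ y ∧ y + 1 ≠ x ∧
    t = u ++ x :: y :: v ∧ t' = u ++ y :: x :: v

/-- Equivalence of index tuples: generated by swapping adjacent commuting indices. -/
def TupleEquiv : List ℕ → List ℕ → Prop := Relation.ReflTransGen CommuteStep

/-- The string `(a : b) = (a, a+1, ..., b)`. -/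
def strTuple (a b : ℕ) : List ℕ := List.range' a (b + 1 - a)

/-- The tuple `(a_s : b_s, ..., a_1 : b_1)` built from a list of pairs of endpoints. -/
def buildCSF (ps : List (ℕ × ℕ)) : List ℕ :=
  (ps.map fun p => strTuple p.1 p.2).flatten

/-- `ps` encodes a tuple in column standard form: each pair `(a_j, b_j)` has `a_j ≤ b_j`
and the heads `b_s > b_{s-1} > ... > b_1` are strictly decreasing. -/
def IsCSFDecomp (ps : List (ℕ × ℕ)) : Prop :=
  (∀ pr ∈ ps, pr.1 ≤ pr.2) ∧ List.Chain' (· > ·) (ps.map Prod.snd)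

/-- The set of heads of an index tuple `t`: the right endpoints of the strings of the
column standard form of `t`. -/
def headsSet (t : List ℕ) : Set ℕ :=
  {h | ∃ ps, IsCSFDecomp ps ∧ TupleEquiv t (buildCSF ps) ∧ h ∈ ps.map Prod.snd}

/-- The set of indices at which the permutation `q` of `{0,…,k-1}` has a consecution:
`i ∈ {0,…,k-2}` occurs to the left of `i+1` in `q`. -/
def consSet (k : ℕ) (q : List ℕ) : Finset ℕ :=
  (Finset.range (k - 1)).filter fun i => q.idxOf i < q.idxOf (i + 1)

/-- The set of indices at which the permutation `q` of `{0,…,k-1}` has an inversion: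
`i ∈ {0,…,k-2}` occurs to the right of `i+1` in `q`. -/
def invSet (k : ℕ) (q : List ℕ) : Finset ℕ :=
  (Finset.range (k - 1)).filter fun i => q.idxOf (i + 1) < q.idxOf i

private lemma mem_strTuple {a b z : ℕ} : z ∈ strTuple a b ↔ a ≤ z ∧ z ≤ b := by
  unfold strTuple
  rw [List.mem_range']
  constructor
  · rintro ⟨i, hi, rfl⟩; omega
  · rintro ⟨h1, h2⟩; exact ⟨z - a, by omega, by omega⟩

private lemma strTuple_split {a b i : ℕ} (h1 : a ≤ i) (h2 : i < b) :
    strTuple a b = strTuple a i ++ strTuple (i + 1) b := by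
  unfold strTuple
  have h := List.range'_append_1 (s := a) (m := i + 1 - a) (n := b - i)
  rw [show a + (i + 1 - a) = i + 1 by omega] at h
  rw [show i + 1 - a + (b - i) = b + 1 - a by omega] at h
  rw [show b + 1 - (i + 1) = b - i by omega]
  exact h.symm

private lemma buildCSF_append (l1 l2 : List (ℕ × ℕ)) :
    buildCSF (l1 ++ l2) = buildCSF l1 ++ buildCSF l2 := by
  simp [buildCSF]

private lemma buildCSF_cons (p : ℕ × ℕ) (l : List (ℕ × ℕ)) :
    buildCSF (p :: l) = strTuple p.1 p.2 ++ buildCSF l := by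
  simp [buildCSF]

private lemma mem_buildCSF {ps : List (ℕ × ℕ)} {z : ℕ} :
    z ∈ buildCSF ps ↔ ∃ pr ∈ ps, pr.1 ≤ z ∧ z ≤ pr.2 := by
  simp only [buildCSF, List.mem_flatten, List.mem_map]
  constructor
  · rintro ⟨l, ⟨pr, hpr, rfl⟩, hz⟩
    exact ⟨pr, hpr, mem_strTuple.1 hz⟩
  · rintro ⟨pr, hpr, h1, h2⟩
    exact ⟨strTuple pr.1 pr.2, ⟨pr, hpr, rfl⟩, mem_strTuple.2 ⟨h1, h2⟩⟩

private lemma indexOf_lt_of_split {l1 l2 : List ℕ} {i j : ℕ} (hnd : (l1 ++ l2).Nodup)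
    (hi : i ∈ l1) (hj : j ∈ l2) :
    (l1 ++ l2).idxOf i < (l1 ++ l2).idxOf j := by
  have hdisj := (List.nodup_append.1 hnd).2.2
  have hj1 : j ∉ l1 := fun h => hdisj j h j hj rfl
  rw [List.idxOf_append_of_mem hi, List.idxOf_append_of_notMem hj1]
  have := List.idxOf_lt_length_iff.2 hi
  omega

private lemma idx_cons2 {z x y : ℕ} (v : List ℕ) (h1 : x ≠ z) (h2 : y ≠ z) :
    (x :: y :: v).idxOf z = (v.idxOf z) + 2 := by
  rw [List.idxOf_cons_ne _ h1, List.idxOf_cons_ne _ h2]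

private lemma commuteStep_core {x y : ℕ} (v : List ℕ) (hxy : x ≠ y) (hxy1 : x + 1 ≠ y)
    (hyx1 : y + 1 ≠ x) (i : ℕ) :
    ((x :: y :: v).idxOf i < (x :: y :: v).idxOf (i + 1)) ↔
      ((y :: x :: v).idxOf i < (y :: x :: v).idxOf (i + 1)) := by
  rcases eq_or_ne i x with rfl | hix
  · have h1 : y ≠ i := fun h => hxy h.symm
    have h2 : i ≠ i + 1 := by omega
    have h3 : y ≠ i + 1 := fun h => hxy1 h.symm
    rw [List.idxOf_cons_self, idx_cons2 v h2 h3, List.idxOf_cons_ne _ h1,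
      List.idxOf_cons_self, idx_cons2 v h3 h2]
    omega
  rcases eq_or_ne i y with rfl | hiy
  · have h2 : i ≠ i + 1 := by omega
    have h3 : x ≠ i + 1 := fun h => hyx1 h.symm
    rw [List.idxOf_cons_ne _ hxy, List.idxOf_cons_self, idx_cons2 v h3 h2,
      List.idxOf_cons_self, idx_cons2 v h2 h3]
    omega
  rcases eq_or_ne (i + 1) x with rfl | hx1
  · have h1 : i + 1 ≠ i := by omega
    have h2 : y ≠ i := fun h => hiy h.symm
    have h3 : y ≠ i + 1 := fun h => hxy h.symm
    rw [idx_cons2 v h1 h2, List.idxOf_cons_self, idx_cons2 v h2 h1,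
      List.idxOf_cons_ne _ h3, List.idxOf_cons_self]
    omega
  rcases eq_or_ne (i + 1) y with rfl | hy1
  · have h1 : x ≠ i := fun h => hix h.symm
    have h2 : i + 1 ≠ i := by omega
    rw [idx_cons2 v h1 h2, List.idxOf_cons_ne _ hxy, List.idxOf_cons_self,
      idx_cons2 v h2 h1, List.idxOf_cons_self]
    omega
  · have h1 : x ≠ i := fun h => hix h.symm
    have h2 : y ≠ i := fun h => hiy h.symm
    have h3 : x ≠ i + 1 := fun h => hx1 h.symm
    have h4 : y ≠ i + 1 := fun h => hy1 h.symm
    rw [idx_cons2 v h1 h2, idx_cons2 v h3 h4, idx_cons2 v h2 h1, idx_cons2 v h4 h3]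

private lemma commuteStep_lt_iff {t t' : List ℕ} (h : CommuteStep t t') (i : ℕ) :
    (t.idxOf i < t.idxOf (i + 1)) ↔ (t'.idxOf i < t'.idxOf (i + 1)) := by
  obtain ⟨u, v, x, y, hxy, hxy1, hyx1, rfl, rfl⟩ := h
  by_cases hi : i ∈ u <;> by_cases hi1 : (i + 1) ∈ u
  · rw [List.idxOf_append_of_mem hi, List.idxOf_append_of_mem hi1,
      List.idxOf_append_of_mem hi, List.idxOf_append_of_mem hi1]
  · rw [List.idxOf_append_of_mem hi, List.idxOf_append_of_notMem hi1,
      List.idxOf_append_of_mem hi, List.idxOf_append_of_notMem hi1]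
    have := List.idxOf_lt_length_iff.2 hi
    omega
  · rw [List.idxOf_append_of_notMem hi, List.idxOf_append_of_mem hi1,
      List.idxOf_append_of_notMem hi, List.idxOf_append_of_mem hi1]
    have := List.idxOf_lt_length_iff.2 hi1
    omega
  · rw [List.idxOf_append_of_notMem hi, List.idxOf_append_of_notMem hi1,
      List.idxOf_append_of_notMem hi, List.idxOf_append_of_notMem hi1]
    have := commuteStep_core v hxy hxy1 hyx1 i
    omega

private lemma tupleEquiv_perm {t t' : List ℕ} (h : TupleEquiv t t') : t.Perm t' := by
  induction h with
  | refl => exact List.Perm.refl t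
  | tail _ hstep ih =>
    obtain ⟨u, v, x, y, _, _, _, rfl, rfl⟩ := hstep
    exact ih.trans (List.Perm.append_left u (List.Perm.swap y x v))

private lemma tupleEquiv_lt_iff {t t' : List ℕ} (h : TupleEquiv t t') (i : ℕ) :
    (t.idxOf i < t.idxOf (i + 1)) ↔ (t'.idxOf i < t'.idxOf (i + 1)) := by
  induction h with
  | refl => exact Iff.rfl
  | tail _ hstep ih => exact ih.trans (commuteStep_lt_iff hstep i)

private lemma indexOf_reverse' {l : List ℕ} (hl : l.Nodup) {z : ℕ} (hz : z ∈ l) :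
    l.reverse.idxOf z = l.length - 1 - l.idxOf z := by
  have h1 : l.idxOf z < l.length := List.idxOf_lt_length_iff.2 hz
  have h2 : l.length - 1 - l.idxOf z < l.reverse.length := by
    rw [List.length_reverse]; omega
  have h3 : l.reverse[l.length - 1 - l.idxOf z]'h2 = z := by
    rw [List.getElem_reverse]
    have h4 : l.length - 1 - (l.length - 1 - l.idxOf z) = l.idxOf z := by omega
    simp only [h4]
    exact List.getElem_idxOf h1
  conv_lhs => rw [← h3]
  exact List.Nodup.idxOf_getElem (List.nodup_reverse.2 hl) _ h2

private lemma reverse_lt_iff {l : List ℕ} (hl : l.Nodup) {i j : ℕ} (hi : i ∈ l) (hj : j ∈ l) :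
    l.reverse.idxOf j < l.reverse.idxOf i ↔ l.idxOf i < l.idxOf j := by
  rw [indexOf_reverse' hl hi, indexOf_reverse' hl hj]
  have h1 := List.idxOf_lt_length_iff.2 hi
  have h2 := List.idxOf_lt_length_iff.2 hj
  rcases eq_or_ne i j with rfl | hij
  · omega
  · have : l.idxOf i ≠ l.idxOf j := fun h => hij ((List.idxOf_inj hi).1 h)
    omega

private lemma csf_inv_of_head {k : ℕ} {ps : List (ℕ × ℕ)} (hps : IsCSFDecomp ps)
    (hperm : (buildCSF ps).Perm (List.range k)) {i : ℕ} (hik : i + 1 < k)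
    (hhead : i ∈ ps.map Prod.snd) :
    (buildCSF ps).idxOf (i + 1) < (buildCSF ps).idxOf i := by
  have hnd : (buildCSF ps).Nodup := hperm.nodup_iff.2 (List.nodup_range (n := k))
  obtain ⟨pj, hpj, hpj2⟩ := List.mem_map.1 hhead
  have hmem1 : (i + 1) ∈ buildCSF ps := hperm.mem_iff.2 (List.mem_range.2 hik)
  obtain ⟨pm, hpm, hpm1, hpm2⟩ := mem_buildCSF.1 hmem1
  have hpw : List.Pairwise (fun p q : ℕ × ℕ => p.2 > q.2) ps :=
    (List.pairwise_map).1 (List.isChain_iff_pairwise.1 hps.2)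
  obtain ⟨u, v, rfl⟩ := List.append_of_mem hpj
  have hpmu : pm ∈ u := by
    rcases List.mem_append.1 hpm with h | h
    · exact h
    · rcases List.mem_cons.1 h with rfl | h
      · omega
      · have hp2 := (List.pairwise_append.1 hpw).2.1
        have hgt := (List.pairwise_cons.1 hp2).1 pm h
        omega
  rw [buildCSF_append]
  refine indexOf_lt_of_split (by rwa [buildCSF_append] at hnd)
    (mem_buildCSF.2 ⟨pm, hpmu, hpm1, hpm2⟩)
    (mem_buildCSF.2 ⟨pj, List.mem_cons_self, ?_, by omega⟩)
  have := hps.1 pj (by simp)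
  omega

private lemma csf_cons_of_not_head {k : ℕ} {ps : List (ℕ × ℕ)} (hps : IsCSFDecomp ps)
    (hperm : (buildCSF ps).Perm (List.range k)) {i : ℕ} (hik : i + 1 < k)
    (hhead : i ∉ ps.map Prod.snd) :
    (buildCSF ps).idxOf i < (buildCSF ps).idxOf (i + 1) := by
  have hnd : (buildCSF ps).Nodup := hperm.nodup_iff.2 (List.nodup_range (n := k))
  have hmem : i ∈ buildCSF ps := hperm.mem_iff.2 (List.mem_range.2 (by omega))
  obtain ⟨pr, hpr, h1, h2⟩ := mem_buildCSF.1 hmem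
  have hlt : i < pr.2 :=
    lt_of_le_of_ne h2 (fun h => hhead (List.mem_map.2 ⟨pr, hpr, h.symm⟩))
  obtain ⟨u, v, rfl⟩ := List.append_of_mem hpr
  have hsplit : buildCSF (u ++ pr :: v) =
      (buildCSF u ++ strTuple pr.1 i) ++ (strTuple (i + 1) pr.2 ++ buildCSF v) := by
    rw [buildCSF_append, buildCSF_cons, strTuple_split h1 hlt]
    simp [List.append_assoc]
  rw [hsplit]
  exact indexOf_lt_of_split (hsplit ▸ hnd)
    (List.mem_append.2 (Or.inr (mem_strTuple.2 ⟨h1, le_refl i⟩)))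
    (List.mem_append.2 (Or.inl (mem_strTuple.2 ⟨le_refl _, hlt⟩)))

private lemma top_mem_heads {k : ℕ} {ps : List (ℕ × ℕ)} (hk : 1 ≤ k) (hps : IsCSFDecomp ps)
    (hperm : (buildCSF ps).Perm (List.range k)) : k - 1 ∈ ps.map Prod.snd := by
  have hmem : k - 1 ∈ buildCSF ps := hperm.mem_iff.2 (List.mem_range.2 (by omega))
  obtain ⟨pr, hpr, h1, h2⟩ := mem_buildCSF.1 hmem
  have hm2 : pr.2 ∈ buildCSF ps := mem_buildCSF.2 ⟨pr, hpr, hps.1 pr hpr, le_refl _⟩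
  have := List.mem_range.1 (hperm.mem_iff.1 hm2)
  exact List.mem_map.2 ⟨pr, hpr, by omega⟩

private lemma heads_nodup {ps : List (ℕ × ℕ)} (hps : IsCSFDecomp ps) :
    (ps.map Prod.snd).Nodup :=
  (List.isChain_iff_pairwise.1 hps.2).imp (fun h => ne_of_gt h)

private lemma heads_lt {k : ℕ} {ps : List (ℕ × ℕ)} (hps : IsCSFDecomp ps)
    (hperm : (buildCSF ps).Perm (List.range k)) {b : ℕ} (hb : b ∈ ps.map Prod.snd) :
    b < k := by
  obtain ⟨pr, hpr, rfl⟩ := List.mem_map.1 hb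
  exact List.mem_range.1 (hperm.mem_iff.1 (mem_buildCSF.2 ⟨pr, hpr, hps.1 pr hpr, le_refl _⟩))

private lemma key_lemma {k : ℕ} {t : List ℕ} {ps : List (ℕ × ℕ)} (hps : IsCSFDecomp ps)
    (ht : t.Perm (List.range k)) (hte : TupleEquiv t (buildCSF ps)) {i : ℕ} (hi : i + 1 < k) :
    (t.idxOf (i + 1) < t.idxOf i ↔ i ∈ ps.map Prod.snd) := by
  have hperm : (buildCSF ps).Perm (List.range k) := (tupleEquiv_perm hte).symm.trans ht
  have hne : t.idxOf i ≠ t.idxOf (i + 1) := by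
    intro h
    have h1 : i ∈ t := ht.mem_iff.2 (List.mem_range.2 (by omega))
    have h2 : i + 1 ∈ t := ht.mem_iff.2 (List.mem_range.2 hi)
    have := (List.idxOf_inj h1).1 h
    omega
  have htr := tupleEquiv_lt_iff hte i
  constructor
  · intro h
    by_contra hh
    have := csf_cons_of_not_head hps hperm hi hh
    omega
  · intro h
    have := csf_inv_of_head hps hperm hi h
    omega

theorem consecutions_inversions_heads (k : ℕ) (hk : 1 ≤ k) (q : List ℕ)
    (hq : q.Perm (List.range k)) :
    ∀ ps ps', IsCSFDecomp ps → TupleEquiv q (buildCSF ps) →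
      IsCSFDecomp ps' → TupleEquiv q.reverse (buildCSF ps') →
      (invSet k q).card + 1 = ps.length ∧
      (consSet k q).card + 1 = ps'.length ∧
      consSet k q = Finset.range (k - 1) \ (ps.map Prod.snd).toFinset ∧
      invSet k q = Finset.range (k - 1) \ (ps'.map Prod.snd).toFinset ∧
      Disjoint (consSet k q) (invSet k q) ∧
      consSet k q ∪ invSet k q = Finset.range (k - 1) := by
  intro ps ps' hps hqe hps' hqe'
  have hqnd : q.Nodup := hq.nodup_iff.2 (List.nodup_range (n := k))
  have hmemq : ∀ z, z < k → z ∈ q := fun z hz => hq.mem_iff.2 (List.mem_range.2 hz)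
  have hqr : q.reverse.Perm (List.range k) := (List.reverse_perm q).trans hq
  have hpermps : (buildCSF ps).Perm (List.range k) := (tupleEquiv_perm hqe).symm.trans hq
  have hpermps' : (buildCSF ps').Perm (List.range k) := (tupleEquiv_perm hqe').symm.trans hqr
  have hne : ∀ i, i + 1 < k → q.idxOf i ≠ q.idxOf (i + 1) := by
    intro i hi h
    have := (List.idxOf_inj (hmemq i (by omega))).1 h
    omega
  have key1 : ∀ i, i + 1 < k → (q.idxOf (i + 1) < q.idxOf i ↔ i ∈ ps.map Prod.snd) :=
    fun i hi => key_lemma hps hq hqe hi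
  have key2 : ∀ i, i + 1 < k → (q.idxOf i < q.idxOf (i + 1) ↔ i ∈ ps'.map Prod.snd) := by
    intro i hi
    rw [← reverse_lt_iff hqnd (hmemq i (by omega)) (hmemq (i + 1) hi)]
    exact key_lemma hps' hqr hqe' hi
  have htop : k - 1 ∈ (ps.map Prod.snd).toFinset :=
    List.mem_toFinset.2 (top_mem_heads hk hps hpermps)
  have htop' : k - 1 ∈ (ps'.map Prod.snd).toFinset :=
    List.mem_toFinset.2 (top_mem_heads hk hps' hpermps')
  have hinv : invSet k q = (ps.map Prod.snd).toFinset.erase (k - 1) := by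
    ext i
    simp only [invSet, Finset.mem_filter, Finset.mem_range, Finset.mem_erase, List.mem_toFinset]
    constructor
    · rintro ⟨h1, h2⟩
      exact ⟨by omega, (key1 i (by omega)).1 h2⟩
    · rintro ⟨h1, h2⟩
      have hlt := heads_lt hps hpermps h2
      exact ⟨by omega, (key1 i (by omega)).2 h2⟩
  have hcons : consSet k q = (ps'.map Prod.snd).toFinset.erase (k - 1) := by
    ext i
    simp only [consSet, Finset.mem_filter, Finset.mem_range, Finset.mem_erase, List.mem_toFinset]
    constructor
    · rintro ⟨h1, h2⟩
      exact ⟨by omega, (key2 i (by omega)).1 h2⟩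
    · rintro ⟨h1, h2⟩
      have hlt := heads_lt hps' hpermps' h2
      exact ⟨by omega, (key2 i (by omega)).2 h2⟩
  have hcard : (ps.map Prod.snd).toFinset.card = ps.length := by
    rw [List.toFinset_card_of_nodup (heads_nodup hps), List.length_map]
  have hcard' : (ps'.map Prod.snd).toFinset.card = ps'.length := by
    rw [List.toFinset_card_of_nodup (heads_nodup hps'), List.length_map]
  have hpos : 0 < (ps.map Prod.snd).toFinset.card := Finset.card_pos.2 ⟨_, htop⟩
  have hpos' : 0 < (ps'.map Prod.snd).toFinset.card := Finset.card_pos.2 ⟨_, htop'⟩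
  refine ⟨?_, ?_, ?_, ?_, ?_, ?_⟩
  · rw [hinv, Finset.card_erase_of_mem htop]
    omega
  · rw [hcons, Finset.card_erase_of_mem htop']
    omega
  · ext i
    simp only [consSet, Finset.mem_filter, Finset.mem_range, Finset.mem_sdiff,
      List.mem_toFinset]
    constructor
    · rintro ⟨h1, h2⟩
      refine ⟨h1, fun h => ?_⟩
      have := (key1 i (by omega)).2 h
      omega
    · rintro ⟨h1, h2⟩
      refine ⟨h1, ?_⟩
      have h3 := hne i (by omega)
      have h4 : ¬ (q.idxOf (i + 1) < q.idxOf i) := fun h => h2 ((key1 i (by omega)).1 h)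
      omega
  · ext i
    simp only [invSet, Finset.mem_filter, Finset.mem_range, Finset.mem_sdiff,
      List.mem_toFinset]
    constructor
    · rintro ⟨h1, h2⟩
      refine ⟨h1, fun h => ?_⟩
      have := (key2 i (by omega)).2 h
      omega
    · rintro ⟨h1, h2⟩
      refine ⟨h1, ?_⟩
      have h3 := hne i (by omega)
      have h4 : ¬ (q.idxOf i < q.idxOf (i + 1)) := fun h => h2 ((key2 i (by omega)).1 h)
      omega
  · rw [Finset.disjoint_left]
    intro i hi hi'
    simp only [consSet, invSet, Finset.mem_filter] at hi hi'
    omega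
  · ext i
    simp only [Finset.mem_union, consSet, invSet, Finset.mem_filter, Finset.mem_range]
    constructor
    · rintro (⟨h, _⟩ | ⟨h, _⟩) <;> exact h
    · intro h
      have := hne i (by omega)
      omega
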